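/- Let s, t ≥ 2 and z > t·(s−1) be natural numbers, set θ' = t·(2s−1) and p = min(⌊(z−1)/(t·(s−1))⌋, t−1). Define the subsets of ℤ: V₁ = {î − w + θ'·l̂ : −t ≤ î ≤ −1, 1 ≤ l̂ ≤ t−1, 0 ≤ w ≤ t·(s−1)−1} and V₂ = {î − u + θ'·l̃ : −t ≤ î ≤ −1, 1 ≤ l̃ ≤ t−1−p, 0 ≤ u ≤ z−1−p·t·(s−1)}. Then V₂ ⊆ V₁. -/
import Mathlib


/-- For s, t ≥ 2 and z > t·(s−1), with θ' = t·(2s−1) and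
p = min(⌊(z−1)/(t·(s−1))⌋, t−1), the set
V₂ = {î − u + θ'·l̃ : −t ≤ î ≤ −1, 1 ≤ l̃ ≤ t−1−p, 0 ≤ u ≤ z−1−p·t·(s−1)}
is contained in
V₁ = {î − w + θ'·l̂ : −t ≤ î ≤ −1, 1 ≤ l̂ ≤ t−1, 0 ≤ w ≤ t·(s−1)−1}. -/
theorem polydot_V2_subset_V1 (s t z : ℕ) (hs : 2 ≤ s) (ht : 2 ≤ t)
    (hz : t * (s - 1) < z) :
    {m : ℤ | ∃ i l u : ℤ, -(t : ℤ) ≤ i ∧ i ≤ -1 ∧ 1 ≤ l ∧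
        l ≤ (t : ℤ) - 1 - (min ((z - 1) / (t * (s - 1))) (t - 1) : ℕ) ∧
        0 ≤ u ∧
        u ≤ (z : ℤ) - 1 - (min ((z - 1) / (t * (s - 1))) (t - 1) : ℕ) * ((t : ℤ) * ((s : ℤ) - 1)) ∧
        m = i - u + ((t : ℤ) * (2 * (s : ℤ) - 1)) * l} ⊆
    {m : ℤ | ∃ i l w : ℤ, -(t : ℤ) ≤ i ∧ i ≤ -1 ∧ 1 ≤ l ∧ l ≤ (t : ℤ) - 1 ∧
        0 ≤ w ∧ w ≤ (t : ℤ) * ((s : ℤ) - 1) - 1 ∧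
        m = i - w + ((t : ℤ) * (2 * (s : ℤ) - 1)) * l} := by
  intro m hm
  obtain ⟨i, l, u, h1, h2, h3, h4, h5, h6, h7⟩ := hm
  set D : ℕ := t * (s - 1) with hD
  have hDpos : 0 < D := Nat.mul_pos (by omega) (by omega)
  have hzpos : 1 ≤ z := by omega
  have hcastD : ((D : ℤ)) = (t : ℤ) * ((s : ℤ) - 1) := by
    push_cast [hD, Nat.cast_sub (by omega : 1 ≤ s)]; ring
  have hpnn : (0 : ℤ) ≤ (min ((z - 1) / D) (t - 1) : ℕ) := Nat.cast_nonneg _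
  refine ⟨i, l, u, h1, h2, h3, by linarith, h5, ?_, h7⟩
  -- u ≤ t(s-1) - 1
  rcases le_or_gt ((z - 1) / D) (t - 1) with hle | hlt
  · have hmin : min ((z - 1) / D) (t - 1) = (z - 1) / D := min_eq_left hle
    rw [hmin] at h6
    have hmod : (z - 1) % D < D := Nat.mod_lt _ hDpos
    have hdm : D * ((z - 1) / D) + (z - 1) % D = z - 1 := Nat.div_add_mod _ _
    have hcast : (D : ℤ) * (((z - 1) / D : ℕ) : ℤ) + (((z - 1) % D : ℕ) : ℤ)
        = (z : ℤ) - 1 := by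
      have := congrArg (fun n : ℕ => (n : ℤ)) hdm
      push_cast [Nat.cast_sub hzpos] at this ⊢
      linarith
    have hmod' : (((z - 1) % D : ℕ) : ℤ) ≤ (D : ℤ) - 1 := by
      have := Nat.le_sub_one_of_lt hmod
      omega
    rw [← hcastD]
    nlinarith [h6, hcast, hmod']
  · have hmin : min ((z - 1) / D) (t - 1) = t - 1 := min_eq_right (le_of_lt hlt)
    rw [hmin] at h4
    have : ((t - 1 : ℕ) : ℤ) = (t : ℤ) - 1 := by
      push_cast [Nat.cast_sub (by omega : 1 ≤ t)]; ring
    rw [this] at h4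
    linarith
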